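/- Let (Ω, μ) be a probability space, E and F standard Borel spaces, A : Ω → E and V : Ω → F measurable, and let σ : F ≃ᵐ F be a measurable equivalence such that the law of (fun ω => (σ (V ω), A ω)) equals the law of (V, A). Then for (law of V)-almost every v ∈ F, the regular conditional distribution satisfies condDistrib A V μ (σ v) = condDistrib A V μ v. -/

import Mathlib

open MeasureTheory ProbabilityTheory

/-- If the joint law of `(V, A)` is invariant under a measurable symmetry `σ` of the
conditioning variable `V`, then the regular conditional distribution of `A` given `V` is
almost everywhere invariant under `σ`. -/
theorem condDistrib_invariant_of_law_invariant
    {Ω E F : Type*} [MeasurableSpace Ω]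
    [MeasurableSpace E] [StandardBorelSpace E] [Nonempty E]
    [MeasurableSpace F] [StandardBorelSpace F]
    (μ : Measure Ω) [IsProbabilityMeasure μ]
    (A : Ω → E) (V : Ω → F) (hA : Measurable A) (hV : Measurable V)
    (σ : F ≃ᵐ F)
    (hsym : Measure.map (fun ω => (σ (V ω), A ω)) μ
      = Measure.map (fun ω => (V ω, A ω)) μ) :
    ∀ᵐ v ∂(Measure.map V μ), condDistrib A V μ (σ v) = condDistrib A V μ v := by
  have hσV : Measurable fun ω => σ (V ω) := σ.measurable.comp hV
  set η := condDistrib A V μ with hη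
  set ν := Measure.map V μ with hν
  -- invariance under σ.symm
  have hsym' : Measure.map (fun ω => (V ω, A ω)) μ
      = Measure.map (fun ω => (σ.symm (V ω), A ω)) μ := by
    have h1 := congrArg (Measure.map (Prod.map σ.symm id)) hsym
    rwa [Measure.map_map (σ.symm.measurable.prodMap measurable_id) (hσV.prodMk hA),
      Measure.map_map (σ.symm.measurable.prodMap measurable_id) (hV.prodMk hA),
      show (Prod.map σ.symm id) ∘ (fun ω => (σ (V ω), A ω)) = fun ω => (V ω, A ω) by
        ext ω <;> simp,
      show (Prod.map σ.symm id) ∘ (fun ω => (V ω, A ω))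
        = fun ω => (σ.symm (V ω), A ω) by ext ω <;> simp] at h1
  -- disintegration
  have hdis : Measure.map (fun ω => (V ω, A ω)) μ = ν ⊗ₘ η := by
    have h := Measure.disintegrate (Measure.map (fun ω => (V ω, A ω)) μ) (Measure.map (fun ω => (V ω, A ω)) μ).condKernel
    rw [Measure.fst_map_prodMk hA] at h
    rw [hη, condDistrib]
    exact h.symm
  -- the comap kernel
  set κ := η.comap σ σ.measurable with hκdef
  have hκ : Measure.map (fun ω => (V ω, A ω)) μ = ν ⊗ₘ κ := by
    rw [hsym']
    have h2 : (fun ω => (σ.symm (V ω), A ω))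
        = (Prod.map σ.symm id) ∘ (fun ω => (V ω, A ω)) := by ext ω <;> simp
    rw [h2, ← Measure.map_map (σ.symm.measurable.prodMap measurable_id) (hV.prodMk hA),
      hdis]
    ext s hs
    rw [Measure.map_apply (σ.symm.measurable.prodMap measurable_id) hs,
      Measure.compProd_apply ((σ.symm.measurable.prodMap measurable_id) hs),
      Measure.compProd_apply hs]
    have hνinv : ν.map σ.symm = ν := by
      have := congrArg Measure.fst hsym
      rw [Measure.fst_map_prodMk hA, Measure.fst_map_prodMk hA,
        show Measure.map (fun ω => σ (V ω)) μ = ν.map σ by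
          rw [hν, Measure.map_map σ.measurable hV]; rfl] at this
      calc ν.map σ.symm = (ν.map σ).map σ.symm := by rw [this]
        _ = ν.map (σ.symm ∘ σ) := Measure.map_map σ.symm.measurable σ.measurable
        _ = ν := by simp
    conv_rhs => rw [← hνinv,
      lintegral_map (Kernel.measurable_kernel_prodMk_left hs) σ.symm.measurable]
    refine lintegral_congr fun v => ?_
    rw [hκdef, Kernel.comap_apply]
    simp only [MeasurableEquiv.apply_symm_apply]
    rfl
  have := condDistrib_ae_eq_of_measure_eq_compProd V hA.aemeasurable hκ
  filter_upwards [this] with v hv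
  rw [show η v = κ v from hv, hκdef, Kernel.comap_apply]
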